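/- arXiv:2412.17757 — 2 statements merged into one kernel-verified Lean document; each statement's English description precedes it below -/
import Mathlib

section
/- Define γ̃(h) = arccot(sinh h) for h ∈ R and β̃(h) = (γ̃(h−1) − γ̃(h+1))/2 for h > 1. Then the function h ↦ γ̃(h)/γ̃(h+1) is increasing for h > 0, and consequently h ↦ β̃(h)/γ̃(h) is increasing for h > 1. -/
open Real

/-- arccot : ℝ → (0,π), the inverse cotangent. -/
noncomputable def arccot (x : ℝ) : ℝ := π / 2 - Real.arctan x

lemma arccot_pos' (x : ℝ) : 0 < arccot x := by
  unfold arccot; linarith [Real.arctan_lt_pi_div_two x]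

lemma mul_arccot_lt_one (x : ℝ) : x * arccot x < 1 := by
  rcases le_or_gt x 0 with hx | hx
  · have h1 := arccot_pos' x
    nlinarith
  · have h1 : arccot x = Real.arctan x⁻¹ := by
      unfold arccot; rw [Real.arctan_inv_of_pos hx]
    rw [h1]
    have hpos : 0 < Real.arctan x⁻¹ := by
      have := Real.arctan_strictMono (show (0:ℝ) < x⁻¹ by positivity)
      simpa [Real.arctan_zero] using this
    have hlt : Real.arctan x⁻¹ < x⁻¹ := by
      have := Real.lt_tan hpos (Real.arctan_lt_pi_div_two _)
      rwa [Real.tan_arctan] at this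
    calc x * Real.arctan x⁻¹ < x * x⁻¹ := by
          exact mul_lt_mul_of_pos_left hlt hx
      _ = 1 := mul_inv_cancel₀ hx.ne'

lemma hasDerivAt_gam (h : ℝ) :
    HasDerivAt (fun h : ℝ => arccot (Real.sinh h)) (-(Real.cosh h)⁻¹) h := by
  have h1 : HasDerivAt (fun h : ℝ => Real.arctan (Real.sinh h))
      (1 / (1 + Real.sinh h ^ 2) * Real.cosh h) h :=
    (Real.hasDerivAt_arctan (Real.sinh h)).comp h (Real.hasDerivAt_sinh h)
  have h2 : (1 : ℝ) / (1 + Real.sinh h ^ 2) * Real.cosh h = (Real.cosh h)⁻¹ := by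
    have hc := Real.cosh_pos h
    have : 1 + Real.sinh h ^ 2 = Real.cosh h ^ 2 := by
      rw [Real.cosh_sq]; ring
    rw [this]; field_simp
  rw [h2] at h1
  have := h1.const_sub (π / 2)
  simpa [arccot] using this

/-- g(h) = cosh h * arccot (sinh h) is strictly decreasing. -/
lemma g_strictAnti : StrictAnti (fun h : ℝ => Real.cosh h * arccot (Real.sinh h)) := by
  apply strictAnti_of_deriv_neg
  intro x
  have hd : HasDerivAt (fun h : ℝ => Real.cosh h * arccot (Real.sinh h))
      (Real.sinh x * arccot (Real.sinh x) + Real.cosh x * (-(Real.cosh x)⁻¹)) x :=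
    (Real.hasDerivAt_cosh x).mul (hasDerivAt_gam x)
  rw [hd.deriv]
  have hc := Real.cosh_pos x
  have h1 : Real.cosh x * (-(Real.cosh x)⁻¹) = -1 := by field_simp
  rw [h1]
  have := mul_arccot_lt_one (Real.sinh x)
  linarith

lemma hasDerivAt_gam_shift (c x : ℝ) :
    HasDerivAt (fun h : ℝ => arccot (Real.sinh (h + c))) (-(Real.cosh (x + c))⁻¹) x := by
  have := (hasDerivAt_gam (x + c)).comp x ((hasDerivAt_id x).add_const c)
  simpa [Function.comp_def] using this

lemma r_strictMono : StrictMono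
    (fun h : ℝ => arccot (Real.sinh h) / arccot (Real.sinh (h + 1))) := by
  apply strictMono_of_deriv_pos
  intro x
  have hγ1 := hasDerivAt_gam x
  have hγ2 := hasDerivAt_gam_shift 1 x
  have hne : arccot (Real.sinh (x + 1)) ≠ 0 := (arccot_pos' _).ne'
  have hd := hγ1.div hγ2 hne
  rw [show (fun h : ℝ => arccot (Real.sinh h) / arccot (Real.sinh (h + 1))) = (fun h : ℝ => arccot (Real.sinh h)) / (fun h : ℝ => arccot (Real.sinh (h + 1))) from rfl, hd.deriv]
  apply div_pos
  · have hg := g_strictAnti (show x < x + 1 by linarith)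
    have hc1 := Real.cosh_pos x
    have hc2 := Real.cosh_pos (x + 1)
    have hp1 := arccot_pos' (Real.sinh x)
    have hp2 := arccot_pos' (Real.sinh (x + 1))
    simp only at hg ⊢
    rw [show -(Real.cosh x)⁻¹ * arccot (Real.sinh (x + 1)) -
        arccot (Real.sinh x) * -(Real.cosh (x + 1))⁻¹
        = arccot (Real.sinh x) / Real.cosh (x + 1)
          - arccot (Real.sinh (x + 1)) / Real.cosh x by
      field_simp; ring]
    rw [sub_pos, div_lt_div_iff₀ hc1 hc2]
    nlinarith
  · positivity

/-- With γ̃(h) = arccot(sinh h) and β̃(h) = (γ̃(h-1) - γ̃(h+1))/2,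
the function h ↦ γ̃(h)/γ̃(h+1) is (strictly) increasing on (0,∞), and consequently
h ↦ β̃(h)/γ̃(h) is (strictly) increasing on (1,∞). -/
theorem gamma_ratio_strictMono :
    StrictMonoOn (fun h : ℝ => arccot (Real.sinh h) / arccot (Real.sinh (h + 1)))
      (Set.Ioi (0 : ℝ)) ∧
    StrictMonoOn (fun h : ℝ =>
      ((arccot (Real.sinh (h - 1)) - arccot (Real.sinh (h + 1))) / 2)
        / arccot (Real.sinh h)) (Set.Ioi (1 : ℝ)) := by
  set r := fun h : ℝ => arccot (Real.sinh h) / arccot (Real.sinh (h + 1)) with hr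
  have hrpos : ∀ h : ℝ, 0 < r h := fun h =>
    div_pos (arccot_pos' _) (arccot_pos' _)
  refine ⟨r_strictMono.strictMonoOn _, ?_⟩
  have key : ∀ h : ℝ,
      ((arccot (Real.sinh (h - 1)) - arccot (Real.sinh (h + 1))) / 2)
        / arccot (Real.sinh h) = (r (h - 1) - (r h)⁻¹) / 2 := by
    intro h
    have h1 : arccot (Real.sinh h) ≠ 0 := (arccot_pos' _).ne'
    have h2 : arccot (Real.sinh (h + 1)) ≠ 0 := (arccot_pos' _).ne'
    simp only [hr]
    rw [show h - 1 + 1 = h by ring, inv_div, ← sub_div, div_div, div_div, mul_comm]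
  intro a ha b hb hab
  simp only [key]
  have h1 : r (a - 1) < r (b - 1) := r_strictMono (by linarith)
  have h2 : (r b)⁻¹ < (r a)⁻¹ := by
    apply inv_strictAnti₀ (hrpos a) (r_strictMono hab)
  linarith
end

section
/- Define γ̃(h) = arccot(sinh h) and β̃(h) = (γ̃(h−1) − γ̃(h+1))/2 for h > 1. Then lim_{h→∞} β̃(h)/γ̃(h) = sinh(1). -/
open Real Filter

lemma S_tendsto : Tendsto (fun h : ℝ => Real.sinh h * Real.exp (-h)) atTop (nhds (1/2)) := by
  have h2 : Tendsto (fun h : ℝ => 2 * h) atTop atTop :=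
    Tendsto.const_mul_atTop two_pos tendsto_id
  have h0 : Tendsto (fun h : ℝ => Real.exp (-(2*h))) atTop (nhds 0) :=
    Real.tendsto_exp_neg_atTop_nhds_zero.comp h2
  have heq : ∀ h : ℝ, Real.sinh h * Real.exp (-h) = (1 - Real.exp (-(2*h))) / 2 := by
    intro h
    rw [Real.sinh_eq]
    have h1 : Real.exp h * Real.exp (-h) = 1 := by rw [← Real.exp_add]; simp
    have h2' : Real.exp (-h) * Real.exp (-h) = Real.exp (-(2*h)) := by
      rw [← Real.exp_add]; ring_nf
    nlinarith [h1, h2']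
  simp only [heq]
  have : Tendsto (fun h : ℝ => (1 - Real.exp (-(2*h))) / 2) atTop (nhds ((1 - 0)/2)) :=
    (tendsto_const_nhds.sub h0).div_const 2
  simpa using this

lemma sinh_tendsto_atTop : Tendsto Real.sinh atTop atTop := by
  have hb : Tendsto (fun h : ℝ => (Real.exp h + (-1)) / 2) atTop atTop :=
    (tendsto_atTop_add_const_right atTop (-1) Real.tendsto_exp_atTop).atTop_div_const two_pos
  refine tendsto_atTop_mono' atTop ?_ hb
  filter_upwards [eventually_ge_atTop (0:ℝ)] with h hh
  rw [Real.sinh_eq]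
  have : Real.exp (-h) ≤ 1 := Real.exp_le_one_iff.mpr (by linarith)
  have := Real.exp_pos (-h)
  linarith

lemma sinh_ratio (c : ℝ) :
    Tendsto (fun h : ℝ => Real.sinh h / Real.sinh (h - c)) atTop (nhds (Real.exp c)) := by
  have hS : Tendsto (fun h : ℝ => Real.sinh h * Real.exp (-h)) atTop (nhds (1/2)) := S_tendsto
  have hSc : Tendsto (fun h : ℝ => Real.sinh (h - c) * Real.exp (-(h - c))) atTop (nhds (1/2)) :=
    hS.comp (tendsto_atTop_add_const_right atTop (-c) tendsto_id)
  have hlim : Tendsto (fun h : ℝ =>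
      (Real.sinh h * Real.exp (-h)) / (Real.sinh (h - c) * Real.exp (-(h - c))) * Real.exp c)
      atTop (nhds (Real.exp c)) := by
    have := (hS.div hSc (by norm_num)).mul_const (Real.exp c)
    simpa using this
  refine hlim.congr' ?_
  filter_upwards [eventually_gt_atTop c] with h hh
  have hpos : 0 < Real.sinh (h - c) := Real.sinh_pos_iff.mpr (by linarith)
  have he : Real.exp (-(h - c)) ≠ 0 := Real.exp_ne_zero _
  have he2 : Real.exp (-h) ≠ 0 := Real.exp_ne_zero _
  field_simp
  rw [show -(h - c) = -h + c by ring, Real.exp_add]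
  ring

lemma arctan_div_tendsto :
    Tendsto (fun x : ℝ => Real.arctan x / x) (nhdsWithin 0 {0}ᶜ) (nhds 1) := by
  have h := (Real.hasDerivAt_arctan 0)
  rw [hasDerivAt_iff_tendsto_slope] at h
  norm_num at h
  refine h.congr fun x => ?_
  simp [slope_def_field, Real.arctan_zero]

/-- With γ̃(h) = arccot(sinh h) and β̃(h) = (γ̃(h-1) - γ̃(h+1))/2 for h > 1,
one has lim_{h→∞} β̃(h)/γ̃(h) = sinh(1). -/
theorem beta_gamma_ratio_tendsto_sinh_one :
    Tendsto (fun h : ℝ =>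
      ((arccot (Real.sinh (h - 1)) - arccot (Real.sinh (h + 1))) / 2)
        / arccot (Real.sinh h)) atTop (nhds (Real.sinh 1)) := by
  have hu : ∀ c : ℝ, Tendsto (fun h : ℝ => (Real.sinh (h - c))⁻¹) atTop (nhdsWithin 0 {0}ᶜ) := by
    intro c
    rw [tendsto_nhdsWithin_iff]
    constructor
    · have hs : Tendsto (fun h : ℝ => Real.sinh (h - c)) atTop atTop :=
        sinh_tendsto_atTop.comp (tendsto_atTop_add_const_right atTop (-c) tendsto_id)
      exact tendsto_inv_atTop_zero.comp hs
    · filter_upwards [eventually_gt_atTop c] with h hh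
      have : 0 < Real.sinh (h - c) := Real.sinh_pos_iff.mpr (by linarith)
      simp [ne_of_gt this]
  have A : ∀ c : ℝ, Tendsto (fun h : ℝ =>
      Real.arctan (Real.sinh (h - c))⁻¹ / (Real.sinh (h - c))⁻¹) atTop (nhds 1) :=
    fun c => arctan_div_tendsto.comp (hu c)
  have hA1t : Tendsto (fun h : ℝ =>
      Real.arctan (Real.sinh (h - 1))⁻¹ / (Real.sinh (h - 1))⁻¹) atTop (nhds 1) := A 1
  have hA2t : Tendsto (fun h : ℝ =>
      Real.arctan (Real.sinh (h + 1))⁻¹ / (Real.sinh (h + 1))⁻¹) atTop (nhds 1) :=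
    (A (-1)).congr (fun h => by norm_num)
  have hA0t : Tendsto (fun h : ℝ =>
      Real.arctan (Real.sinh h)⁻¹ / (Real.sinh h)⁻¹) atTop (nhds 1) :=
    (A 0).congr (fun h => by norm_num)
  have hr1 : Tendsto (fun h : ℝ => Real.sinh h / Real.sinh (h - 1)) atTop (nhds (Real.exp 1)) :=
    sinh_ratio 1
  have hr2 : Tendsto (fun h : ℝ => Real.sinh h / Real.sinh (h + 1)) atTop
      (nhds (Real.exp (-1))) :=
    (sinh_ratio (-1)).congr (fun h => by norm_num)
  have hg : Tendsto (fun h : ℝ =>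
      ((Real.arctan (Real.sinh (h - 1))⁻¹ / (Real.sinh (h - 1))⁻¹)
          * (Real.sinh h / Real.sinh (h - 1))
        - (Real.arctan (Real.sinh (h + 1))⁻¹ / (Real.sinh (h + 1))⁻¹)
          * (Real.sinh h / Real.sinh (h + 1)))
        / (2 * (Real.arctan (Real.sinh h)⁻¹ / (Real.sinh h)⁻¹)))
      atTop (nhds (Real.sinh 1)) := by
    have := ((hA1t.mul hr1).sub (hA2t.mul hr2)).div
      ((tendsto_const_nhds (x := (2:ℝ))).mul hA0t) (by norm_num)
    have hval : (1 * Real.exp 1 - 1 * Real.exp (-1)) / (2 * 1) = Real.sinh 1 := by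
      rw [Real.sinh_eq]; ring
    rwa [hval] at this
  refine hg.congr' ?_
  filter_upwards [eventually_gt_atTop (1 : ℝ)] with h hh
  have p1 : 0 < Real.sinh (h - 1) := Real.sinh_pos_iff.mpr (by linarith)
  have p2 : 0 < Real.sinh (h + 1) := Real.sinh_pos_iff.mpr (by linarith)
  have p0 : 0 < Real.sinh h := Real.sinh_pos_iff.mpr (by linarith)
  have e1 : arccot (Real.sinh (h - 1)) = Real.arctan (Real.sinh (h - 1))⁻¹ :=
    (Real.arctan_inv_of_pos p1).symm
  have e2 : arccot (Real.sinh (h + 1)) = Real.arctan (Real.sinh (h + 1))⁻¹ :=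
    (Real.arctan_inv_of_pos p2).symm
  have e0 : arccot (Real.sinh h) = Real.arctan (Real.sinh h)⁻¹ :=
    (Real.arctan_inv_of_pos p0).symm
  have a0pos : 0 < Real.arctan (Real.sinh h)⁻¹ := by
    have := Real.arctan_strictMono (show (0:ℝ) < (Real.sinh h)⁻¹ by positivity)
    simpa [Real.arctan_zero] using this
  rw [e1, e2, e0]
  have a0ne : Real.arctan (Real.sinh h)⁻¹ ≠ 0 := ne_of_gt a0pos
  field_simp [ne_of_gt p1, ne_of_gt p2, ne_of_gt p0, a0ne]
end
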